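/- There exists no nonzero function G ∈ H²(ℝ) (with G''' defined classically) solving 4G'''(z) + zG(z) = 0 for all z ∈ ℝ with G(z) > 0 for all z ∈ ℝ and G, G' decaying at ±∞; more precisely, if G is a smooth solution of 4G''' + zG = 0 on ℝ with G, G', G'' → 0 as z → ±∞ and G, G'' ∈ L²(ℝ), then 4∫_ℝ (G'')² dz + (1/2)∫_ℝ G² dz = 0, hence G ≡ 0. -/

import Mathlib

open MeasureTheory Filter Topology

/-- No nonzero positive decaying global solution of `4G''' + zG = 0`: if `G` solves the
ODE on ℝ with `G, G', G'' → 0` at `±∞` and `G, G'' ∈ L²(ℝ)`, then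
`4∫(G'')² + (1/2)∫G² = 0`, hence `G ≡ 0`. -/
theorem no_global_decaying_G
    (G : ℝ → ℝ) (hG : ContDiff ℝ 3 G)
    (hode : ∀ z : ℝ, 4 * iteratedDeriv 3 G z + z * G z = 0)
    (hdecay_top : ∀ k ≤ 2, Tendsto (fun z => iteratedDeriv k G z) atTop (𝓝 0))
    (hdecay_bot : ∀ k ≤ 2, Tendsto (fun z => iteratedDeriv k G z) atBot (𝓝 0))
    (hL2 : Integrable (fun z => (G z) ^ 2))
    (hL2'' : Integrable (fun z => (iteratedDeriv 2 G z) ^ 2)) :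
    4 * (∫ z : ℝ, (iteratedDeriv 2 G z) ^ 2) + (1/2) * (∫ z : ℝ, (G z) ^ 2) = 0
      ∧ ∀ z : ℝ, G z = 0 := by
  set g1 := iteratedDeriv 1 G with hg1
  set g2 := iteratedDeriv 2 G with hg2
  set g3 := iteratedDeriv 3 G with hg3
  -- derivatives
  have hd0 : ∀ z, HasDerivAt G (g1 z) z := by
    intro z
    have := (hG.differentiable_iteratedDeriv 0 (by norm_num)).differentiableAt (x := z)
    rw [iteratedDeriv_zero] at this
    simpa [hg1, iteratedDeriv_succ, iteratedDeriv_zero] using this.hasDerivAt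
  have hd1 : ∀ z, HasDerivAt g1 (g2 z) z := by
    intro z
    have := (hG.differentiable_iteratedDeriv 1 (by norm_num)).differentiableAt (x := z)
    simpa [hg1, hg2, iteratedDeriv_succ] using this.hasDerivAt
  have hd2 : ∀ z, HasDerivAt g2 (g3 z) z := by
    intro z
    have := (hG.differentiable_iteratedDeriv 2 (by norm_num)).differentiableAt (x := z)
    simpa [hg2, hg3, iteratedDeriv_succ] using this.hasDerivAt
  -- the key antiderivative
  set H : ℝ → ℝ := fun z => 4 * g2 z * g1 z + z * G z ^ 2 / 2 with hH
  set f : ℝ → ℝ := fun z => 4 * g2 z ^ 2 + G z ^ 2 / 2 with hf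
  have hHd : ∀ z, HasDerivAt H (f z) z := by
    intro z
    have h1 : HasDerivAt (fun z => 4 * g2 z * g1 z)
        (4 * g3 z * g1 z + 4 * g2 z * g2 z) z := by
      simpa [mul_assoc, Pi.mul_def] using (((hd2 z).const_mul 4).mul (hd1 z))
    have h2 : HasDerivAt (fun z => z * G z ^ 2 / 2)
        ((1 * G z ^ 2 + z * (2 * G z * g1 z)) / 2) z := by
      have := ((hasDerivAt_id z).mul ((hd0 z).pow 2)).div_const 2
      refine this.congr_deriv ?_
      all_goals norm_num [Pi.mul_apply, Pi.pow_apply]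
    have := h1.add h2
    refine this.congr_deriv ?_
    simp only [hf]
    linear_combination (g1 z) * hode z
  have hfc : Continuous f := by
    have hc2 : Continuous g2 := hG.continuous_iteratedDeriv 2 (by norm_num)
    exact (continuous_const.mul (hc2.pow 2)).add ((hG.continuous.pow 2).div_const 2)
  have hfi : Integrable f := by
    have := (hL2''.const_mul 4).add (hL2.div_const 2)
    simpa [hf, mul_comm, div_eq_mul_inv, Pi.add_def] using this
  have hFTC : ∀ R : ℝ, ∫ z in (-R)..R, f z = H R - H (-R) := by
    intro R
    exact intervalIntegral.integral_eq_sub_of_hasDerivAt (fun z _ => hHd z)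
      (hfc.intervalIntegrable _ _)
  set L : ℝ := ∫ z : ℝ, f z with hL
  have hlim : Tendsto (fun R : ℝ => H R - H (-R)) atTop (𝓝 L) := by
    have := MeasureTheory.intervalIntegral_tendsto_integral hfi
      tendsto_neg_atTop_atBot tendsto_id
    simpa [hFTC] using this
  -- boundary terms from G'' G' vanish
  have hb1 : Tendsto (fun R : ℝ => 4 * g2 R * g1 R) atTop (𝓝 0) := by
    have := ((hdecay_top 2 le_rfl).const_mul 4).mul (hdecay_top 1 (by norm_num))
    simpa only [mul_zero] using this
  have hb2 : Tendsto (fun R : ℝ => 4 * g2 (-R) * g1 (-R)) atTop (𝓝 0) := by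
    have := (((hdecay_bot 2 le_rfl).const_mul 4).mul
      (hdecay_bot 1 (by norm_num))).comp tendsto_neg_atTop_atBot
    simpa only [Function.comp_def, mul_zero] using this
  have hF : Tendsto (fun R : ℝ => R * (G R ^ 2 + G (-R) ^ 2) / 2) atTop (𝓝 L) := by
    have := (hlim.sub hb1).add hb2
    have heq : (fun R : ℝ => H R - H (-R) - 4 * g2 R * g1 R + 4 * g2 (-R) * g1 (-R))
        = fun R : ℝ => R * (G R ^ 2 + G (-R) ^ 2) / 2 := by
      funext R; simp only [hH]; ring
    rw [heq] at this
    simpa using this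
  -- L ≥ 0
  have hint2 : (0:ℝ) ≤ ∫ z : ℝ, g2 z ^ 2 := integral_nonneg fun z => sq_nonneg _
  have hint0 : (0:ℝ) ≤ ∫ z : ℝ, G z ^ 2 := integral_nonneg fun z => sq_nonneg _
  have hLval : L = 4 * (∫ z : ℝ, g2 z ^ 2) + (1/2) * (∫ z : ℝ, G z ^ 2) := by
    rw [hL, hf]
    rw [integral_add (hL2''.const_mul 4) (hL2.div_const 2),
      integral_const_mul, integral_div]
    ring
  have hLnonneg : 0 ≤ L := by rw [hLval]; positivity
  -- L ≤ 0 : otherwise G² is not integrable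
  have hLzero : L = 0 := by
    by_contra hne
    have hLpos : 0 < L := lt_of_le_of_ne hLnonneg (Ne.symm hne)
    have hev : ∀ᶠ R : ℝ in atTop, L / 2 < R * (G R ^ 2 + G (-R) ^ 2) / 2 :=
      hF.eventually (eventually_gt_nhds (by linarith))
    obtain ⟨R0, hR0⟩ := (hev.and (eventually_ge_atTop (1:ℝ))).exists_forall_of_atTop
    have hR0pos : (0:ℝ) < R0 := lt_of_lt_of_le one_pos (hR0 R0 le_rfl).2
    have hphi : IntegrableOn (fun z : ℝ => G z ^ 2 + G (-z) ^ 2) (Set.Ioi R0) :=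
      (hL2.add hL2.comp_neg).integrableOn
    have hinv : IntegrableOn (fun z : ℝ => L * z⁻¹) (Set.Ioi R0) := by
      refine Integrable.mono hphi ((measurable_const.mul measurable_inv).aestronglyMeasurable) ?_
      rw [ae_restrict_iff' measurableSet_Ioi]
      refine ae_of_all _ fun z hz => ?_
      have hz0 : (1:ℝ) ≤ z := le_of_lt (lt_of_le_of_lt (hR0 R0 le_rfl).2 hz)
      have hzpos : (0:ℝ) < z := lt_of_lt_of_le one_pos hz0
      have h := (hR0 z (le_of_lt hz)).1
      have hbound : L * z⁻¹ ≤ G z ^ 2 + G (-z) ^ 2 := by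
        rw [div_lt_div_iff₀ (by norm_num) (by norm_num)] at h
        rw [mul_inv_le_iff₀ hzpos]
        nlinarith
      have hnn : (0:ℝ) ≤ G z ^ 2 + G (-z) ^ 2 := by positivity
      rw [Real.norm_eq_abs, Real.norm_eq_abs, abs_of_nonneg hnn,
        abs_of_nonneg (le_of_lt (by positivity : (0:ℝ) < L * z⁻¹))]
      exact hbound
    have hinv' : IntegrableOn (fun z : ℝ => z⁻¹) (Set.Ioi R0) := by
      have h := hinv.const_mul L⁻¹
      have heq : (fun x : ℝ => L⁻¹ * (L * x⁻¹)) = fun x : ℝ => x⁻¹ := by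
        funext x
        field_simp
      rwa [heq] at h
    have : IntegrableOn (fun z : ℝ => z ^ (-1 : ℝ)) (Set.Ioi R0) := by
      refine hinv'.congr_fun (fun z hz => ?_) measurableSet_Ioi
      rw [Real.rpow_neg_one]
    rw [integrableOn_Ioi_rpow_iff hR0pos] at this
    linarith
  have hG2zero : ∫ z : ℝ, G z ^ 2 = 0 := by
    have h2 : (0:ℝ) ≤ 4 * (∫ z : ℝ, g2 z ^ 2) := by linarith
    have h0 : (0:ℝ) ≤ (1/2) * (∫ z : ℝ, G z ^ 2) := by linarith
    rw [hLzero] at hLval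
    linarith
  constructor
  · rw [hLzero] at hLval; linarith [hG2zero, hLval]
  · have hae : (fun z : ℝ => G z ^ 2) =ᵐ[volume] 0 := by
      rw [← integral_eq_zero_iff_of_nonneg (fun z => sq_nonneg _) hL2]
      exact hG2zero
    have heq : (fun z : ℝ => G z ^ 2) = 0 :=
      (Continuous.ae_eq_iff_eq volume (hG.continuous.pow 2) continuous_const).mp hae
    intro z
    have h2 : G z ^ 2 = 0 := by simpa using congrFun heq z
    exact (pow_eq_zero_iff two_ne_zero).mp h2
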